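/- Let v^(n) denote the prefix of length n of the infinite word (ab)^ω. For every n ≥ 0, |ψ(v^(n))| = F_{n+1} − 2, where (F_n) is the Fibonacci sequence with F_{−1} = F_0 = 1 and F_{n+1} = F_n + F_{n−1}. -/

import Mathlib

def palClosure (w : List Bool) : List Bool :=
  let k := Nat.find (p := fun k => (w.drop k).reverse = w.drop k)
    ⟨w.length, by simp⟩
  w.take k ++ w.drop k ++ (w.take k).reverse

def psi (v : List Bool) : List Bool := v.foldl (fun w x => palClosure (w ++ [x])) []

def E (v : List Bool) : List Bool := v.map (!·)

def mu (x : Bool) (w : List Bool) : List Bool := w.flatMap (fun y => if y = x then [x] else [x, y])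

def muW : List Bool → List Bool → List Bool
  | [], w => w
  | x :: v, w => mu x (muW v w)

def vN (n : ℕ) : List Bool := (List.range n).map (fun i => decide (i % 2 = 1))

def fibF : ℕ → ℕ
  | 0 => 1
  | 1 => 1
  | n + 2 => fibF (n + 1) + fibF n

def HasPeriod (w : List Bool) (p : ℕ) : Prop :=
  0 < p ∧ ∀ i j (hi : i < w.length) (hj : j < w.length),
    i % p = j % p → w.get ⟨i, hi⟩ = w.get ⟨j, hj⟩

noncomputable def minPeriod (w : List Bool) : ℕ := sInf {p | HasPeriod w p}

def dOp : List Bool → List Bool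
  | x :: y :: u => y :: x :: u
  | w => w

def cOp (v : List Bool) : List Bool := (dOp v.reverse).reverse

def contAux : List ℕ → ℕ
  | [] => 1
  | [a] => a
  | a :: b :: t => a * contAux (b :: t) + contAux t

namespace Stmt9Aux

/-- simple periodicity predicate -/
def Per (w : List Bool) (p : ℕ) : Prop := ∀ i, i + p < w.length → w[i]? = w[i + p]?

def xn (n : ℕ) : Bool := decide (n % 2 = 1)
def Pw (n : ℕ) : List Bool := psi (vN n)
def W (n : ℕ) : List Bool := Pw n ++ [xn n]

lemma psi_step (n : ℕ) : Pw (n + 1) = palClosure (W n) := by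
  simp only [Pw, W, xn, psi, vN]
  rw [List.range_succ, List.map_append, List.foldl_append]
  rfl

lemma fib_pos : ∀ n, 0 < fibF n
  | 0 => one_pos
  | 1 => one_pos
  | n + 2 => by
      have h1 := fib_pos (n + 1)
      have : fibF (n + 2) = fibF (n + 1) + fibF n := rfl
      omega

lemma fib_le (n : ℕ) : fibF n ≤ fibF (n + 1) := by
  cases n with
  | zero => simp [fibF]
  | succ m =>
      show fibF (m + 1) ≤ fibF (m + 2)
      have h := fib_pos m
      have : fibF (m + 2) = fibF (m + 1) + fibF m := rfl
      omega

lemma two_le_fib (n : ℕ) : 2 ≤ fibF (n + 2) := by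
  have h1 := fib_pos (n + 1)
  have h2 := fib_pos n
  have : fibF (n + 2) = fibF (n + 1) + fibF n := rfl
  omega

lemma xn_succ_ne (n : ℕ) : xn (n + 1) ≠ xn (n + 2) := by
  simp only [xn, ne_eq, decide_eq_decide]
  omega

lemma xn_eq2 (n : ℕ) : xn n = xn (n + 2) := by
  simp only [xn, decide_eq_decide]
  omega

lemma prefix_getElem? {u w : List Bool} (h : u <+: w) {i : ℕ} (hi : i < u.length) :
    w[i]? = u[i]? := by
  obtain ⟨r, rfl⟩ := h
  exact List.getElem?_append_left hi

lemma pal_idx {w : List Bool} (h : w.reverse = w) {i : ℕ} (hi : i < w.length) :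
    w[i]? = w[w.length - 1 - i]? := by
  nth_rewrite 1 [← h]
  exact List.getElem?_reverse hi

lemma per_prefix {u w : List Bool} {p : ℕ} (h : u <+: w) (hp : Per w p) : Per u p := by
  intro i hi
  have hlen := h.length_le
  rw [← prefix_getElem? h (i := i) (by omega), ← prefix_getElem? h (i := i + p) hi]
  exact hp i (by omega)

/-- a palindrome with a palindromic prefix has the corresponding period -/
lemma per_of_pal_prefix {t q : List Bool} (ht : t.reverse = t) (hq : q <+: t)
    (hqpal : q.reverse = q) : Per t (t.length - q.length) := by
  intro i hi
  have hql := hq.length_le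
  have hi' : i < q.length := by omega
  have e1 : t[i + (t.length - q.length)]? = t[t.length - 1 - (i + (t.length - q.length))]? :=
    pal_idx ht (by omega)
  have e2 : t.length - 1 - (i + (t.length - q.length)) = q.length - 1 - i := by omega
  rw [e1, e2, prefix_getElem? hq (i := i) hi', prefix_getElem? hq (i := q.length - 1 - i) (by omega)]
  exact pal_idx hqpal hi'

/-- a word P·x, P a palindrome, with a palindromic suffix obtained by dropping j letters,
has period j+1 -/
lemma per_of_pal_suffix {P : List Bool} {x : Bool} {j : ℕ} (hP : P.reverse = P)
    (hs : ((P ++ [x]).drop j).reverse = (P ++ [x]).drop j) :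
    Per (P ++ [x]) (j + 1) := by
  intro i hi
  have hlw : (P ++ [x]).length = P.length + 1 := by simp
  have hij : i + j < P.length := by omega
  have hdl : ((P ++ [x]).drop j).length = P.length + 1 - j := by simp
  have e1 : ((P ++ [x]).drop j)[i + 1]? =
      ((P ++ [x]).drop j)[((P ++ [x]).drop j).length - 1 - (i + 1)]? :=
    pal_idx hs (by omega)
  rw [List.getElem?_drop, List.getElem?_drop] at e1
  have e2 : j + (((P ++ [x]).drop j).length - 1 - (i + 1)) = P.length - 1 - i := by omega
  have e3 : j + (i + 1) = i + (j + 1) := by omega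
  rw [e2, e3] at e1
  have hpre : P <+: P ++ [x] := ⟨[x], rfl⟩
  rw [e1, prefix_getElem? hpre (i := P.length - 1 - i) (by omega),
    prefix_getElem? hpre (i := i) (by omega)]
  exact pal_idx hP (show i < P.length by omega)

lemma drop_of_pal_prefix {t u : List Bool} (ht : t.reverse = t) (hu : u <+: t) :
    t.drop (t.length - u.length) = u.reverse := by
  obtain ⟨r, rfl⟩ := hu
  have h2 : u ++ r = r.reverse ++ u.reverse := by rw [← List.reverse_append, ht]
  rw [show (u ++ r).length - u.length = r.reverse.length by simp]
  nth_rewrite 1 [h2]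
  exact List.drop_left

lemma palClosure_eq (w : List Bool) (k : ℕ)
    (h1 : (w.drop k).reverse = w.drop k)
    (h2 : ∀ j < k, ¬ ((w.drop j).reverse = w.drop j)) :
    palClosure w = w.take k ++ w.drop k ++ (w.take k).reverse := by
  have hfind : Nat.find (p := fun k => (w.drop k).reverse = w.drop k)
      ⟨w.length, by simp⟩ = k := by
    rw [Nat.find_eq_iff]
    exact ⟨h1, fun j hj => h2 j hj⟩
  simp only [palClosure]
  rw [hfind]

structure Inv (n : ℕ) : Prop where
  len : (Pw n).length = fibF (n + 2) - 2
  pal : (Pw n).reverse = Pw n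
  formula : Pw (n + 1) = W n ++ ((W n).take (fibF (n + 1) - 1)).reverse
  noP : ∀ p, 0 < p → p < fibF n → ¬ Per (Pw n) p
  noW : ∀ p, 0 < p → p < fibF (n + 1) → ¬ Per (W n) p
  palsuf : ((W n).drop (fibF (n + 1) - 1)).reverse = (W n).drop (fibF (n + 1) - 1)

lemma pw0 : Pw 0 = [] := rfl

lemma w0 : W 0 = [false] := rfl

lemma pw1 : Pw 1 = [false] := by
  rw [psi_step 0, w0]
  rw [palClosure_eq [false] 0 (by decide) (by omega)]
  decide

lemma w1 : W 1 = [false, true] := by rw [W, pw1]; rfl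

lemma pw2 : Pw 2 = [false, true, false] := by
  rw [psi_step 1, w1]
  rw [palClosure_eq [false, true] 1 (by decide) (by decide)]
  decide

lemma inv0 : Inv 0 := by
  refine ⟨rfl, rfl, ?_, ?_, ?_, ?_⟩
  · rw [pw1, w0]; rfl
  · intro p hp hp'; simp [fibF] at hp'; omega
  · intro p hp hp'; simp [fibF] at hp'; omega
  · rw [w0]; rfl

lemma inv1 : Inv 1 := by
  refine ⟨?_, ?_, ?_, ?_, ?_, ?_⟩
  · rw [pw1]; rfl
  · rw [pw1]; rfl
  · rw [pw2, w1]; rfl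
  · intro p hp hp'; simp [fibF] at hp'; omega
  · intro p hp hp'
    have hp1 : p = 1 := by simp [fibF] at hp'; omega
    subst hp1
    rw [w1]
    intro h
    have := h 0 (by simp)
    simp at this
  · rw [w1]; rfl

lemma step (n : ℕ) (I0 : Inv n) (I1 : Inv (n + 1)) : Inv (n + 2) := by
  have p0 := fib_pos n; have p1 := fib_pos (n + 1); have p2 := fib_pos (n + 2)
  have p3 := fib_pos (n + 3); have p4 := fib_pos (n + 4)
  have e2 : fibF (n + 2) = fibF (n + 1) + fibF n := rfl
  have e3 : fibF (n + 3) = fibF (n + 2) + fibF (n + 1) := rfl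
  have e4 : fibF (n + 4) = fibF (n + 3) + fibF (n + 2) := rfl
  -- normalized restatements of the invariant fields
  have I0len : (Pw n).length = fibF (n + 2) - 2 := I0.len
  have I0formula : Pw (n + 1) = W n ++ ((W n).take (fibF (n + 1) - 1)).reverse := I0.formula
  have I1len : (Pw (n + 1)).length = fibF (n + 3) - 2 := I1.len
  have I1formula : Pw (n + 2) = W (n + 1) ++ ((W (n + 1)).take (fibF (n + 2) - 1)).reverse :=
    I1.formula
  have I1noP : ∀ p, 0 < p → p < fibF (n + 1) → ¬ Per (Pw (n + 1)) p := I1.noP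
  have I1noW : ∀ p, 0 < p → p < fibF (n + 2) → ¬ Per (W (n + 1)) p := I1.noW
  have I1palsuf : ((W (n + 1)).drop (fibF (n + 2) - 1)).reverse =
      (W (n + 1)).drop (fibF (n + 2) - 1) := I1.palsuf
  -- lengths
  have lW1 : (W (n + 1)).length = fibF (n + 3) - 1 := by
    rw [W, List.length_append, I1len]; simp; omega
  have lW0 : (W n).length = fibF (n + 2) - 1 := by
    rw [W, List.length_append, I0len]; simp; omega
  have len2 : (Pw (n + 2)).length = fibF (n + 4) - 2 := by
    rw [I1formula, List.length_append, List.length_reverse, List.length_take, lW1]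
    omega
  -- prefixes
  have hWP : W (n + 1) <+: Pw (n + 2) := ⟨_, I1formula.symm⟩
  have hPW : ∀ m, Pw m <+: W m := fun m => ⟨[xn m], rfl⟩
  have hP1P2 : Pw (n + 1) <+: Pw (n + 2) := (hPW (n + 1)).trans hWP
  have hW0P1 : W n <+: Pw (n + 1) := ⟨_, I0formula.symm⟩
  have hW0P2 : W n <+: Pw (n + 2) := hW0P1.trans ((hPW (n + 1)).trans hWP)
  -- palindromicity of Pw (n+2)
  have pal2 : (Pw (n + 2)).reverse = Pw (n + 2) := by
    have hW : W (n + 1) =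
        (W (n + 1)).take (fibF (n + 2) - 1) ++ (W (n + 1)).drop (fibF (n + 2) - 1) :=
      (List.take_append_drop _ _).symm
    rw [I1formula]
    nth_rewrite 1 [hW]
    rw [List.reverse_append, List.reverse_reverse, List.reverse_append, I1palsuf,
      ← List.append_assoc, List.take_append_drop]
  -- no small period of Pw (n+2)
  have noP2 : ∀ p, 0 < p → p < fibF (n + 2) → ¬ Per (Pw (n + 2)) p := by
    intro p hp hp' hper
    exact I1noW p hp hp' (per_prefix hWP hper)
  -- Pw (n+2) has period fibF (n+2)
  have perQ0 : Per (Pw (n + 2)) (fibF (n + 2)) := by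
    have h := per_of_pal_prefix pal2 hP1P2 I1.pal
    have he : (Pw (n + 2)).length - (Pw (n + 1)).length = fibF (n + 2) := by
      rw [len2, I1len]; omega
    rwa [he] at h
  -- no small period of W (n+2)
  have hlenW2 : (W (n + 2)).length = fibF (n + 4) - 1 := by
    rw [W, List.length_append, len2]; simp; omega
  have noW2 : ∀ p, 0 < p → p < fibF (n + 3) → ¬ Per (W (n + 2)) p := by
    intro p hp hp' hper
    have hprefW : W (n + 1) <+: W (n + 2) := hWP.trans (hPW (n + 2))
    rcases lt_trichotomy p (fibF (n + 2)) with hlt | heq | hgt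
    · exact I1noW p hp hlt (per_prefix hprefW hper)
    · -- p = fibF (n+2): explicit mismatch
      subst heq
      have hidx := hper (fibF (n + 3) - 2) (by omega)
      have hv1 : (W (n + 2))[fibF (n + 3) - 2]? = some (xn (n + 1)) := by
        rw [prefix_getElem? hprefW (by omega)]
        rw [W, show fibF (n + 3) - 2 = (Pw (n + 1)).length by rw [I1len]]
        exact List.getElem?_concat_length
      have hv2 : (W (n + 2))[fibF (n + 3) - 2 + fibF (n + 2)]? = some (xn (n + 2)) := by
        rw [show fibF (n + 3) - 2 + fibF (n + 2) = (Pw (n + 2)).length by rw [len2]; omega]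
        rw [W]
        exact List.getElem?_concat_length
      rw [hv1, hv2] at hidx
      exact xn_succ_ne n (Option.some_injective _ hidx)
    · -- fibF (n+2) < p < fibF (n+3): derive small period of Pw (n+1)
      have hperP : Per (Pw (n + 2)) p := per_prefix (hPW (n + 2)) hper
      have hper1 : Per (Pw (n + 1)) (p - fibF (n + 2)) := by
        intro i hi
        rw [I1len] at hi
        have hi1 : i + p < (Pw (n + 2)).length := by rw [len2]; omega
        have hq0 := perQ0 (i + (p - fibF (n + 2))) (by rw [len2]; omega)
        have harith : i + (p - fibF (n + 2)) + fibF (n + 2) = i + p := by omega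
        rw [harith] at hq0
        calc (Pw (n + 1))[i]?
            = (Pw (n + 2))[i]? := (prefix_getElem? hP1P2 (by rw [I1len]; omega)).symm
          _ = (Pw (n + 2))[i + p]? := hperP i hi1
          _ = (Pw (n + 2))[i + (p - fibF (n + 2))]? := hq0.symm
          _ = (Pw (n + 1))[i + (p - fibF (n + 2))]? :=
              prefix_getElem? hP1P2 (by rw [I1len]; omega)
      exact I1noP (p - fibF (n + 2)) (by omega) (by omega) hper1
  -- palindromic suffix of W (n+2)
  have palsuf2 : ((W (n + 2)).drop (fibF (n + 3) - 1)).reverse =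
      (W (n + 2)).drop (fibF (n + 3) - 1) := by
    have hdrop : (W (n + 2)).drop (fibF (n + 3) - 1) =
        (Pw (n + 2)).drop (fibF (n + 3) - 1) ++ [xn (n + 2)] := by
      rw [W, List.drop_append_of_le_length (by rw [len2]; omega)]
    have hdp : (Pw (n + 2)).drop (fibF (n + 3) - 1) = (W n).reverse := by
      have h := drop_of_pal_prefix pal2 hW0P2
      rwa [show (Pw (n + 2)).length - (W n).length = fibF (n + 3) - 1 by
        rw [len2, lW0]; omega] at h
    rw [hdrop, hdp, W, ← xn_eq2 n]
    simp [List.reverse_append, I0.pal]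
  -- the closure formula for the next step
  have formula2 : Pw (n + 3) = W (n + 2) ++ ((W (n + 2)).take (fibF (n + 3) - 1)).reverse := by
    rw [psi_step (n + 2),
      palClosure_eq (W (n + 2)) (fibF (n + 3) - 1) palsuf2 ?_]
    · rw [List.take_append_drop]
    · intro j hj hpal
      have hper : Per (W (n + 2)) (j + 1) := by
        rw [W] at hpal ⊢
        exact per_of_pal_suffix pal2 hpal
      exact noW2 (j + 1) (by omega) (by omega) hper
  exact ⟨len2, pal2, formula2, noP2, noW2, palsuf2⟩

lemma inv_all (n : ℕ) : Inv n := by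
  suffices h : Inv n ∧ Inv (n + 1) from h.1
  induction n with
  | zero => exact ⟨inv0, inv1⟩
  | succ m ih => exact ⟨ih.2, step m ih.1 ih.2⟩

end Stmt9Aux

theorem stmt9 (n : ℕ) : (psi (vN n)).length = fibF (n + 2) - 2 := (Stmt9Aux.inv_all n).len
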